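/- Let k be a field of characteristic 2, n ≥ 1, and let g be the Lie algebra of the special orthogonal group of the quadratic form q = x_0² + x_1 x_{n+1} + ... + x_n x_{2n} on k^{2n+1} (i.e., the Lie algebra of endomorphisms u of k^{2n+1} preserving the associated bilinear form and stabilizing q infinitesimally). Then the span n_n of the elementary matrices e_{0,i} for 1 ≤ i ≤ 2n is an abelian (hence nilpotent) ideal of g, and consequently the Killing form of g is degenerate. -/

import Mathlib

attribute [local instance 100] LieRing.ofAssociativeRing

/-- Let `k` be a field of characteristic 2, `n ≥ 1`, and let `g` be the Lie algebra
of the special orthogonal group of the quadratic form `q = x₀² + x₁x_{n+1} + ⋯ + x_n x_{2n}` on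
`k^{2n+1}`: the matrices `u` that preserve the associated (polar) bilinear form `B` of `q` and
stabilize `q` infinitesimally (`B(v, u v) = 0` for all `v`).  Then the span `n_n` of the
elementary matrices `e_{0,i}`, `1 ≤ i ≤ 2n`, is an abelian (hence nilpotent) ideal of `g`, and
consequently the Killing form of `g` is degenerate. -/
theorem stmt_15 (k : Type*) [Field k] [CharP k 2] (n : ℕ) (hn : 1 ≤ n)
    (q : (Fin (2 * n + 1) → k) → k)
    (hq : ∀ v, q v = v ⟨0, by omega⟩ ^ 2 +
      ∑ i : Fin n, v ⟨i.1 + 1, by have := i.2; omega⟩ * v ⟨n + 1 + i.1, by have := i.2; omega⟩)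
    (B : (Fin (2 * n + 1) → k) → (Fin (2 * n + 1) → k) → k)
    (hB : ∀ v w, B v w = q (v + w) - q v - q w)
    (g : LieSubalgebra k (Matrix (Fin (2 * n + 1)) (Fin (2 * n + 1)) k))
    (hg : ∀ u : Matrix (Fin (2 * n + 1)) (Fin (2 * n + 1)) k,
      u ∈ g ↔ ((∀ v w, B (u.mulVec v) w + B v (u.mulVec w) = 0) ∧ ∀ v, B v (u.mulVec v) = 0))
    (nn : Submodule k (Matrix (Fin (2 * n + 1)) (Fin (2 * n + 1)) k))
    (hnn : nn = Submodule.span k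
      {M | ∃ i : Fin (2 * n + 1), i ≠ ⟨0, by omega⟩ ∧
        M = Matrix.single ⟨0, by omega⟩ i (1 : k)}) :
    (∀ a ∈ nn, a ∈ g) ∧
    (∀ a ∈ nn, ∀ b ∈ nn, ⁅a, b⁆ = 0) ∧
    (∀ u ∈ g, ∀ a ∈ nn, ⁅u, a⁆ ∈ nn) ∧
    ¬ (∀ a : g, (∀ b : g, killingForm k g a b = 0) → a = 0) := by
  set i0 : Fin (2 * n + 1) := ⟨0, by omega⟩ with hi0
  set lo : Fin n → Fin (2 * n + 1) := fun j => ⟨j.1 + 1, by have := j.2; omega⟩ with hlo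
  set hi : Fin n → Fin (2 * n + 1) := fun j => ⟨n + 1 + j.1, by have := j.2; omega⟩ with hhi
  have hlo0 : ∀ j, lo j ≠ i0 := fun j => by simp [hlo, hi0, Fin.ext_iff]
  have hhi0 : ∀ j, hi j ≠ i0 := fun j => by simp [hhi, hi0, Fin.ext_iff]
  have hlohi : ∀ j j', lo j ≠ hi j' := by
    intro j j'
    simp only [hlo, hhi, ne_eq, Fin.mk.injEq]
    have := j.2; omega
  have hiinj : Function.Injective hi := by
    intro j j' h
    simp only [hhi, Fin.mk.injEq] at h
    exact Fin.ext (by omega)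
  have loinj : Function.Injective lo := by
    intro j j' h
    simp only [hlo, Fin.mk.injEq] at h
    exact Fin.ext (by omega)
  -- formula for B
  have hBf : ∀ v w, B v w = ∑ j : Fin n, (v (lo j) * w (hi j) + w (lo j) * v (hi j)) := by
    intro v w
    rw [hB, hq, hq, hq]
    simp only [Pi.add_apply]
    rw [CharTwo.add_sq]
    have hsum : (∑ j : Fin n, (v (lo j) + w (lo j)) * (v (hi j) + w (hi j)))
        - (∑ j : Fin n, v (lo j) * v (hi j)) - (∑ j : Fin n, w (lo j) * w (hi j))
        = ∑ j : Fin n, (v (lo j) * w (hi j) + w (lo j) * v (hi j)) := by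
      rw [← Finset.sum_sub_distrib, ← Finset.sum_sub_distrib]
      exact Finset.sum_congr rfl fun j _ => by ring
    linear_combination hsum
  -- B vanishes when one argument is supported on coordinate 0
  have hB0l : ∀ (c : k) w, B (Pi.single i0 c) w = 0 := by
    intro c w
    rw [hBf]
    apply Finset.sum_eq_zero
    intro j _
    rw [Pi.single_eq_of_ne (hlo0 j), Pi.single_eq_of_ne (hhi0 j)]
    ring
  have hB0r : ∀ (c : k) v, B v (Pi.single i0 c) = 0 := by
    intro c v
    rw [hBf]
    apply Finset.sum_eq_zero
    intro j _
    rw [Pi.single_eq_of_ne (hlo0 j), Pi.single_eq_of_ne (hhi0 j)]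
    ring
  -- every index ≠ 0 is lo j or hi j
  have hcover : ∀ a : Fin (2 * n + 1), a ≠ i0 → (∃ j, a = lo j) ∨ (∃ j, a = hi j) := by
    intro a ha
    have ha' : a.1 ≠ 0 := fun h => ha (Fin.ext h)
    by_cases h : a.1 ≤ n
    · exact Or.inl ⟨⟨a.1 - 1, by omega⟩, by simp only [hlo, Fin.ext_iff]; omega⟩
    · exact Or.inr ⟨⟨a.1 - (n + 1), by have := a.2; omega⟩,
        by simp only [hhi, Fin.ext_iff]; omega⟩
  -- a vector B-orthogonal to everything vanishes away from coordinate 0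
  have hext : ∀ c : Fin (2 * n + 1) → k, (∀ w, B c w = 0) → ∀ a, a ≠ i0 → c a = 0 := by
    intro c hc a ha
    rcases hcover a ha with ⟨j, rfl⟩ | ⟨j, rfl⟩
    · have h := hc (Pi.single (hi j) 1)
      rw [hBf, Finset.sum_eq_single j] at h
      · rw [Pi.single_eq_same, Pi.single_eq_of_ne (hlohi j j)] at h
        simpa using h
      · intro j' _ hj'
        rw [Pi.single_eq_of_ne (fun h' => hj' (hiinj h')),
          Pi.single_eq_of_ne (hlohi j' j)]
        ring
      · simp
    · have h := hc (Pi.single (lo j) 1)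
      rw [hBf, Finset.sum_eq_single j] at h
      · rw [Pi.single_eq_same, Pi.single_eq_of_ne (Ne.symm (hlohi j j))] at h
        simpa using h
      · intro j' _ hj'
        rw [Pi.single_eq_of_ne (fun h' => hj' (loinj h')),
          Pi.single_eq_of_ne (Ne.symm (hlohi j j'))]
        ring
      · simp
  -- column 0 of elements of g vanishes off position (0,0)
  have hcol : ∀ u ∈ g, ∀ a, a ≠ i0 → u a i0 = 0 := by
    intro u hu a ha
    have h1 := ((hg u).1 hu).1
    have hc : ∀ w, B (u.mulVec (Pi.single i0 1)) w = 0 := by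
      intro w
      have h2 := h1 (Pi.single i0 1) w
      rwa [hB0l, add_zero] at h2
    have h3 := hext _ hc a ha
    have h4 : u.mulVec (Pi.single i0 1) a = u a i0 := by
      simp [Matrix.mulVec, dotProduct, Pi.single_apply]
    rwa [h4] at h3
  -- entries of elements of nn
  have h1 : ∀ M ∈ nn, ∀ a b : Fin (2 * n + 1), (a ≠ i0 ∨ b = i0) → M a b = 0 := by
    rw [hnn]
    intro M hM
    induction hM using Submodule.span_induction with
    | mem M hM =>
      obtain ⟨i, hi', rfl⟩ := hM
      intro a b hab
      rcases hab with h | rfl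
      · simp [Matrix.single, (Ne.symm h : ¬ (i0 = a))]
      · simp only [Matrix.single, Matrix.of_apply, ite_eq_right_iff, and_imp]
        exact fun _ h => absurd h hi'
    | zero => simp
    | add x y _ _ hx hy => intro a b hab; simp [hx a b hab, hy a b hab]
    | smul c x _ hx => intro a b hab; simp [hx a b hab]
  -- sufficient condition for membership in nn
  have h2 : ∀ M : Matrix (Fin (2 * n + 1)) (Fin (2 * n + 1)) k,
      (∀ a b : Fin (2 * n + 1), (a ≠ i0 ∨ b = i0) → M a b = 0) → M ∈ nn := by
    intro M hM
    rw [hnn, Matrix.matrix_eq_sum_single M]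
    apply Submodule.sum_mem
    intro a _
    apply Submodule.sum_mem
    intro b _
    by_cases ha : a = i0
    · subst ha
      by_cases hb : b = i0
      · subst hb
        rw [hM i0 i0 (Or.inr rfl)]
        simp
      · have : Matrix.single i0 b (M i0 b)
            = M i0 b • Matrix.single i0 b (1 : k) := by
          rw [Matrix.smul_single, smul_eq_mul, mul_one]
        rw [this]
        exact Submodule.smul_mem _ _ (Submodule.subset_span ⟨b, hb, rfl⟩)
    · rw [hM a b (Or.inl ha)]
      simp
  -- nn ⊆ g
  have hmemg : ∀ M ∈ nn, M ∈ g := by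
    intro M hM
    have hrow : ∀ v, M.mulVec v = Pi.single i0 (M.mulVec v i0) := by
      intro v
      funext a
      by_cases ha : a = i0
      · subst ha; rw [Pi.single_eq_same]
      · rw [Pi.single_eq_of_ne ha]
        simp only [Matrix.mulVec, dotProduct]
        exact Finset.sum_eq_zero fun c _ => by rw [h1 M hM a c (Or.inl ha), zero_mul]
    rw [hg]
    constructor
    · intro v w
      rw [hrow v, hrow w, hB0l, hB0r, add_zero]
    · intro v
      rw [hrow v, hB0r]
  -- abelian
  have hAb : ∀ a ∈ nn, ∀ b ∈ nn, ⁅a, b⁆ = (0 : Matrix (Fin (2 * n + 1)) (Fin (2 * n + 1)) k) := by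
    intro a ha b hb
    rw [Ring.lie_def]
    have hmul : ∀ (x y : Matrix (Fin (2 * n + 1)) (Fin (2 * n + 1)) k),
        x ∈ nn → y ∈ nn → x * y = 0 := by
      intro x y hx hy
      ext p r
      rw [Matrix.mul_apply, Matrix.zero_apply]
      apply Finset.sum_eq_zero
      intro c _
      by_cases hc : c = i0
      · subst hc; rw [h1 x hx p i0 (Or.inr rfl), zero_mul]
      · rw [h1 y hy c r (Or.inl hc), mul_zero]
    rw [hmul a b ha hb, hmul b a hb ha, sub_zero]
  -- ideal property
  have hIdeal : ∀ u ∈ g, ∀ a ∈ nn, ⁅u, a⁆ ∈ nn := by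
    intro u hu m hm
    apply h2
    intro a b hab
    rw [Ring.lie_def, Matrix.sub_apply, Matrix.mul_apply, Matrix.mul_apply]
    rcases hab with ha | rfl
    · rw [Finset.sum_eq_zero, Finset.sum_eq_zero, sub_zero]
      · intro c _
        rw [h1 m hm a c (Or.inl ha), zero_mul]
      · intro c _
        by_cases hc : c = i0
        · subst hc; rw [hcol u hu a ha, zero_mul]
        · rw [h1 m hm c b (Or.inl hc), mul_zero]
    · rw [Finset.sum_eq_zero, Finset.sum_eq_zero, sub_zero]
      · intro c _
        by_cases hc : c = i0
        · subst hc; rw [h1 m hm a i0 (Or.inr rfl), zero_mul]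
        · rw [hcol u hu c hc, mul_zero]
      · intro c _
        rw [h1 m hm c i0 (Or.inr rfl), mul_zero]
  refine ⟨hmemg, hAb, hIdeal, ?_⟩
  -- degeneracy of the Killing form
  intro hnd
  have h2n : 1 < 2 * n + 1 := by omega
  set i1 : Fin (2 * n + 1) := ⟨1, h2n⟩ with hi1
  have hi10 : i1 ≠ i0 := by simp [hi1, hi0, Fin.ext_iff]
  set E : Matrix (Fin (2 * n + 1)) (Fin (2 * n + 1)) k :=
    Matrix.single i0 i1 1 with hE
  have hEnn : E ∈ nn := by
    rw [hnn]
    exact Submodule.subset_span ⟨i1, hi10, rfl⟩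
  have hEg : E ∈ g := hmemg E hEnn
  set a0 : g := ⟨E, hEg⟩ with ha0
  have h4 : ∀ bm ∈ g, ∀ zm ∈ g,
      ⁅E, ⁅bm, ⁅E, ⁅bm, zm⁆⁆⁆⁆ = (0 : Matrix (Fin (2 * n + 1)) (Fin (2 * n + 1)) k) := by
    intro bm hbm zm hzm
    have hbz : ⁅bm, zm⁆ ∈ g := g.lie_mem hbm hzm
    have hm2 : ⁅E, ⁅bm, zm⁆⁆ ∈ nn := by
      rw [← lie_skew]
      exact neg_mem (hIdeal _ hbz E hEnn)
    have hm3 : ⁅bm, ⁅E, ⁅bm, zm⁆⁆⁆ ∈ nn := hIdeal _ hbm _ hm2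
    exact hAb E hEnn _ hm3
  have hK : ∀ b : g, killingForm k g a0 b = 0 := by
    intro b
    rw [killingForm_apply_apply]
    have hnil : IsNilpotent ((LieAlgebra.ad k g a0) ∘ₗ (LieAlgebra.ad k g b)) := by
      refine ⟨2, ?_⟩
      apply LinearMap.ext
      intro z
      have hz : (((LieAlgebra.ad k g a0) ∘ₗ (LieAlgebra.ad k g b)) ^ 2) z
          = ⁅a0, ⁅b, ⁅a0, ⁅b, z⁆⁆⁆⁆ := by
        rw [pow_two]
        simp [LieAlgebra.ad_apply]
      rw [hz, LinearMap.zero_apply]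
      apply Subtype.ext
      simp only [LieSubalgebra.coe_bracket, ZeroMemClass.coe_zero]
      exact h4 _ b.2 _ z.2
    have := LinearMap.isNilpotent_trace_of_isNilpotent hnil
    exact this.eq_zero
  have h0 := hnd a0 hK
  have : E = 0 := by
    have := congrArg Subtype.val h0
    simpa [ha0] using this
  have h01 : E i0 i1 = (1 : k) := by simp [hE]
  rw [this] at h01
  simp at h01
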